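/- Let H be a countable group, and let O(g_1), O(g_2), ... be an enumeration of all finite conjugacy classes of H. For each n, let H_n = ⟨O(g_1), ..., O(g_n)⟩ be the subgroup generated by the first n finite conjugacy classes. Then each H_n is a normal subgroup of H, the centralizer C_H(H_n) has finite index in H, and H_n is center-by-finite, i.e., [H_n : Z(H_n)] < ∞. Moreover H_1 ≤ H_2 ≤ ⋯ ≤ H^{fc} and ⋃_n H_n = H^{fc}. -/
import Mathlib

section aux

variable {H : Type*} [Group H]

private lemma conjClass_conj (h k : H) :
    (Set.range fun j : H => j * (k * h * k⁻¹) * j⁻¹) = Set.range fun j : H => j * h * j⁻¹ := by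
  ext x
  constructor
  · rintro ⟨j, rfl⟩; exact ⟨j * k, by group⟩
  · rintro ⟨j, rfl⟩; exact ⟨j * k⁻¹, by group⟩

/-- The FC-center as a subgroup. -/
private def FCcenter (H : Type*) [Group H] : Subgroup H where
  carrier := {h | (Set.range fun k : H => k * h * k⁻¹).Finite}
  one_mem' := by
    refine Set.Finite.subset (Set.finite_singleton 1) ?_
    rintro x ⟨k, rfl⟩; simp
  mul_mem' := by
    intro a b ha hb
    refine Set.Finite.subset (Set.Finite.image2 (· * ·) ha hb) ?_
    rintro x ⟨k, rfl⟩
    exact ⟨k * a * k⁻¹, ⟨k, rfl⟩, k * b * k⁻¹, ⟨k, rfl⟩, by group⟩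
  inv_mem' := by
    intro a ha
    refine Set.Finite.subset (ha.image Inv.inv) ?_
    rintro x ⟨k, rfl⟩
    exact ⟨k * a * k⁻¹, ⟨k, rfl⟩, by group⟩

private lemma fi_centralizer_singleton {a : H}
    (ha : (Set.range fun k : H => k * a * k⁻¹).Finite) :
    (Subgroup.centralizer ({a} : Set H)).FiniteIndex := by
  haveI : Finite (H ⧸ Subgroup.centralizer ({a} : Set H)) := by
    haveI := ha.to_subtype
    refine Finite.of_injective
      (fun q : H ⧸ Subgroup.centralizer ({a} : Set H) => Quotient.liftOn' q
        (fun k => (⟨k * a * k⁻¹, ⟨k, rfl⟩⟩ : (Set.range fun k : H => k * a * k⁻¹)))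
        ?_) ?_
    · intro x y h
      have h' : x⁻¹ * y ∈ Subgroup.centralizer ({a} : Set H) :=
        QuotientGroup.leftRel_apply.mp h
      have hc : a * (x⁻¹ * y) = (x⁻¹ * y) * a :=
        Subgroup.mem_centralizer_iff.mp h' a rfl
      apply Subtype.ext
      show x * a * x⁻¹ = y * a * y⁻¹
      have : x * (a * (x⁻¹ * y)) * y⁻¹ = x * ((x⁻¹ * y) * a) * y⁻¹ := by rw [hc]
      calc x * a * x⁻¹ = x * (a * (x⁻¹ * y)) * y⁻¹ := by group
        _ = x * ((x⁻¹ * y) * a) * y⁻¹ := this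
        _ = y * a * y⁻¹ := by group
    · intro q1 q2 hq
      induction q1 using Quotient.inductionOn' with
      | h x =>
      induction q2 using Quotient.inductionOn' with
      | h y =>
      have heq : x * a * x⁻¹ = y * a * y⁻¹ := congrArg Subtype.val hq
      apply Quotient.sound'
      rw [QuotientGroup.leftRel_apply]
      apply Subgroup.mem_centralizer_iff.mpr
      rintro b rfl
      calc b * (x⁻¹ * y) = x⁻¹ * (x * b * x⁻¹) * y := by group
        _ = x⁻¹ * (y * b * y⁻¹) * y := by rw [heq]
        _ = (x⁻¹ * y) * b := by group
  exact Subgroup.finiteIndex_of_finite_quotient (H := Subgroup.centralizer ({a} : Set H))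

end aux

/-- Let `H` be a countable group, and let `O(g 1), O(g 2), ...` be an
enumeration of (representatives of) all finite conjugacy classes of `H`.  For each `n`
let `Hₙ = ⟨O(g 0), ..., O(g n)⟩`.  Then each `Hₙ` is normal in `H`, the centralizer
`C_H(Hₙ)` has finite index in `H`, each `Hₙ` is center-by-finite, the `Hₙ` form an
increasing tower, and their union is the FC-center `H^{fc}`. -/
theorem stmt5 {H : Type*} [Group H] [Countable H]
    (g : ℕ → H)
    (hfin : ∀ n, (Set.range fun k : H => k * g n * k⁻¹).Finite)
    (hcover : ∀ h : H, (Set.range fun k : H => k * h * k⁻¹).Finite →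
      ∃ n, h ∈ Set.range fun k : H => k * g n * k⁻¹) :
    ∀ Hn : ℕ → Subgroup H,
      (Hn = fun n => Subgroup.closure
        (⋃ i ∈ Finset.range (n + 1), Set.range fun k : H => k * g i * k⁻¹)) →
      (∀ n, (Hn n).Normal) ∧
      (∀ n, (Subgroup.centralizer (Hn n : Set H)).FiniteIndex) ∧
      (∀ n, (Subgroup.center ↥(Hn n)).FiniteIndex) ∧
      (∀ n, Hn n ≤ Hn (n + 1)) ∧
      (∀ h : H, (Set.range fun k : H => k * h * k⁻¹).Finite ↔ ∃ n, h ∈ Hn n) := by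
  intro Hn hHn
  subst hHn
  set S : ℕ → Set H :=
    fun n => ⋃ i ∈ Finset.range (n + 1), Set.range fun k : H => k * g i * k⁻¹ with hS
  -- every element of S n has a finite conjugacy class
  have hSfc : ∀ n, ∀ a ∈ S n, (Set.range fun k : H => k * a * k⁻¹).Finite := by
    intro n a haS
    simp only [hS, Set.mem_iUnion] at haS
    obtain ⟨i, -, k, rfl⟩ := haS
    rw [conjClass_conj]
    exact hfin i
  -- S n is finite
  have hSfin : ∀ n, (S n).Finite := by
    intro n
    exact Set.Finite.biUnion (Finset.range (n + 1)).finite_toSet fun i _ => hfin i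
  -- conjugation preserves S n
  have hconjS : ∀ n (k : H), (fun x => k * x * k⁻¹) '' S n = S n := by
    intro n k
    simp only [hS, Set.image_iUnion]
    refine Set.iUnion_congr fun i => Set.iUnion_congr fun _ => ?_
    ext x
    constructor
    · rintro ⟨-, ⟨j, rfl⟩, rfl⟩; exact ⟨k * j, by group⟩
    · rintro ⟨j, rfl⟩; exact ⟨k⁻¹ * j * (g i) * (k⁻¹ * j)⁻¹, ⟨k⁻¹ * j, rfl⟩, by group⟩
  -- normality
  have hnormal : ∀ n, (Subgroup.closure (S n)).Normal := by
    intro n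
    constructor
    intro h hmem k
    have h1 : k * h * k⁻¹ ∈ (Subgroup.closure (S n)).map (MulAut.conj k).toMonoidHom :=
      ⟨h, hmem, by simp [MulAut.conj_apply]⟩
    rwa [MonoidHom.map_closure, show ⇑(MulAut.conj k).toMonoidHom '' S n = S n from hconjS n k]
      at h1
  -- centralizer finite index
  have hcent : ∀ n, (Subgroup.centralizer (Subgroup.closure (S n) : Set H)).FiniteIndex := by
    intro n
    haveI := (hSfin n).to_subtype
    have hle : (⨅ a : S n, Subgroup.centralizer ({(a : H)} : Set H)) ≤
        Subgroup.centralizer (Subgroup.closure (S n) : Set H) := by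
      intro x hx
      simp only [Subgroup.mem_iInf] at hx
      apply Subgroup.mem_centralizer_iff.mpr
      intro h hh
      have hsub : S n ⊆ (Subgroup.centralizer ({x} : Set H) : Set H) := by
        intro a haS
        apply Subgroup.mem_centralizer_iff.mpr
        rintro b rfl
        exact (Subgroup.mem_centralizer_iff.mp (hx ⟨a, haS⟩) a (Set.mem_singleton a)).symm
      have : h ∈ Subgroup.centralizer ({x} : Set H) :=
        (Subgroup.closure_le _).mpr hsub hh
      exact (Subgroup.mem_centralizer_iff.mp this x (Set.mem_singleton x)).symm
    haveI : (⨅ a : S n, Subgroup.centralizer ({(a : H)} : Set H)).FiniteIndex :=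
      Subgroup.finiteIndex_iInf fun a => fi_centralizer_singleton (hSfc n a.1 a.2)
    exact Subgroup.finiteIndex_of_le hle
  refine ⟨hnormal, hcent, ?_, ?_, ?_⟩
  · -- center-by-finite
    intro n
    haveI := hcent n
    refine Subgroup.finiteIndex_of_le (H := (Subgroup.centralizer
      ((Subgroup.closure (S n) : Subgroup H) : Set H)).subgroupOf (Subgroup.closure (S n))) ?_
    intro x hx
    rw [Subgroup.mem_center_iff]
    intro y
    apply Subtype.ext
    show (y : H) * (x : H) = (x : H) * (y : H)
    exact Subgroup.mem_centralizer_iff.mp (Subgroup.mem_subgroupOf.mp hx) y y.2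
  · -- increasing
    intro n
    apply Subgroup.closure_mono
    intro x hx
    simp only [hS, Set.mem_iUnion] at hx ⊢
    obtain ⟨i, hi, hx⟩ := hx
    exact ⟨i, Finset.mem_range.mpr (by have := Finset.mem_range.mp hi; omega), hx⟩
  · -- union is FC-center
    intro h
    constructor
    · intro hfc
      obtain ⟨n, hn⟩ := hcover h hfc
      refine ⟨n, Subgroup.subset_closure ?_⟩
      simp only [hS, Set.mem_iUnion]
      exact ⟨n, Finset.self_mem_range_succ n, hn⟩
    · rintro ⟨n, hn⟩
      have : Subgroup.closure (S n) ≤ FCcenter H :=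
        (Subgroup.closure_le _).mpr fun a haS => hSfc n a haS
      exact this hn
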